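/- One-step reduction preserves denotations: if E(x⃗) →^{(p,j,q)} F(x⃗), then for every Φ-structure A and every tuple of arguments x⃗ ∈ Aⁿ, the denotation of E(x⃗) in A equals the denotation of F(x⃗) in A (as partial values, with Kleene strong equality). -/

import Mathlib

namespace McCarthy

/-- Sorts: individual (`ind`) and Boolean (`bool`). -/
inductive Srt where
  | ind | bool
deriving DecidableEq

/-- A function variable is identified by its sort, arity and index. -/
abbrev FV : Type := Srt × ℕ × ℕ

/-- Explicit terms over a vocabulary `Φ`. -/
inductive Term (Φ : Type) where
  | tt : Term Φ
  | ff : Term Φ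
  | ivar : ℕ → Term Φ
  | fapp : FV → List (Term Φ) → Term Φ
  | prim : Φ → List (Term Φ) → Term Φ
  | cond : Srt → Term Φ → Term Φ → Term Φ → Term Φ

variable {Φ : Type}

def isIvar : Term Φ → Bool
  | .ivar _ => true
  | _ => false

/-- Immediate terms: individual variables, or function variables applied to
individual variables (nullary function variables included). -/
def isImmediate : Term Φ → Bool
  | .ivar _ => true
  | .fapp p args => (args.all isIvar) && (args.length == p.2.1)
  | _ => false

/-- Irreducible terms: immediate terms, Boolean constants, or applications
with immediate arguments. -/
def isIrreducible : Term Φ → Bool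
  | .tt => true
  | .ff => true
  | .ivar _ => true
  | .fapp p args => ((args.all isIvar) && (args.length == p.2.1)) || args.all isImmediate
  | .prim _ args => args.all isImmediate
  | .cond _ a b c => isImmediate a && isImmediate b && isImmediate c

/-- The sort of an immediate (or irreducible non-`prim`) term. -/
def immSort : Term Φ → Srt
  | .tt => .bool
  | .ff => .bool
  | .fapp p _ => p.1
  | .cond s _ _ _ => s
  | _ => .ind

mutual
/-- `sizeT E` counts the occurrences of non-immediate proper subterms of `E`. -/
def sizeT : Term Φ → ℕ
  | .tt => 0
  | .ff => 0
  | .ivar _ => 0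
  | .fapp _ args => sizeTL args
  | .prim _ args => sizeTL args
  | .cond _ a b c =>
      (sizeT a + (if isImmediate a then 0 else 1)) +
      (sizeT b + (if isImmediate b then 0 else 1)) +
      (sizeT c + (if isImmediate c then 0 else 1))

def sizeTL : List (Term Φ) → ℕ
  | [] => 0
  | t :: ts => (sizeT t + (if isImmediate t then 0 else 1)) + sizeTL ts
end

mutual
/-- Renaming of function variables. -/
def renameF (ρ : FV → FV) : Term Φ → Term Φ
  | .tt => .tt
  | .ff => .ff
  | .ivar i => .ivar i
  | .fapp p args => .fapp (ρ p) (renameFL ρ args)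
  | .prim f args => .prim f (renameFL ρ args)
  | .cond s a b c => .cond s (renameF ρ a) (renameF ρ b) (renameF ρ c)

def renameFL (ρ : FV → FV) : List (Term Φ) → List (Term Φ)
  | [] => []
  | t :: ts => renameF ρ t :: renameFL ρ ts
end

mutual
/-- Renaming of individual variables. -/
def renameV (σ : ℕ → ℕ) : Term Φ → Term Φ
  | .tt => .tt
  | .ff => .ff
  | .ivar i => .ivar (σ i)
  | .fapp p args => .fapp p (renameVL σ args)
  | .prim f args => .prim f (renameVL σ args)
  | .cond s a b c => .cond s (renameV σ a) (renameV σ b) (renameV σ c)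

def renameVL (σ : ℕ → ℕ) : List (Term Φ) → List (Term Φ)
  | [] => []
  | t :: ts => renameV σ t :: renameVL σ ts
end

mutual
/-- Does the function variable `q` occur in the term? -/
def occursF (q : FV) : Term Φ → Bool
  | .tt => false
  | .ff => false
  | .ivar _ => false
  | .fapp p args => (decide (p = q)) || occursFL q args
  | .prim _ args => occursFL q args
  | .cond _ a b c => occursF q a || occursF q b || occursF q c

def occursFL (q : FV) : List (Term Φ) → Bool
  | [] => false
  | t :: ts => occursF q t || occursFL q ts
end


/-! ## Extended recursive programs -/

/-- A body equation `p(x⃗) = rhs`. -/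
structure Eqn (Φ : Type) where
  p : FV
  xs : List ℕ
  rhs : Term Φ

/-- An extended recursive program `E₀(x⃗) where { p₁(x⃗₁) = E₁, …, p_K(x⃗_K) = E_K }`,
with the body represented as a multiset (set representation of the paper). -/
structure ExtProg (Φ : Type) where
  fvars : List ℕ
  head : Term Φ
  body : Multiset (Eqn Φ)

/-- The function variables bound by the body of a program. -/
def bodyPvars (E : ExtProg Φ) : Multiset FV := E.body.map Eqn.p

/-- `q` is fresh for `E`: it is not a recursion variable of `E` and occurs nowhere in `E`. -/
def FreshIn (q : FV) (E : ExtProg Φ) : Prop :=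
  occursF q E.head = false ∧ ∀ e ∈ E.body, e.p ≠ q ∧ occursF q e.rhs = false

/-- The argument list of an application term (the empty list otherwise). -/
def argsOf : Term Φ → List (Term Φ)
  | .fapp _ as => as
  | .prim _ as => as
  | .cond _ a b c => [a, b, c]
  | _ => []

/-- Replace the argument list of an application term. -/
def withArgs : Term Φ → List (Term Φ) → Term Φ
  | .fapp p _, as => .fapp p as
  | .prim f _, as => .prim f as
  | .cond s _ _ _, [a, b, c] => .cond s a b c
  | t, _ => t

def isApp : Term Φ → Bool
  | .fapp _ _ => true
  | .prim _ _ => true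
  | .cond _ _ _ _ => true
  | _ => false

/-- Labels `(p, j, q)` of arrow reductions. -/
abbrev Lbl : Type := FV × ℕ × FV

/-- The arrow-reduction relation `E(x⃗) →^{(p,j,q)} F(x⃗)` on extended programs:
either a non-immediate `j`-th argument of the (outermost application) right-hand side
of the body equation for `p` is split off into a new equation for the fresh variable `q`
(body case), or — when `p` is fresh, serving merely as a marker — the non-immediate
`j`-th argument of the head is split off (head case). -/
inductive Step : Lbl → ExtProg Φ → ExtProg Φ → Prop where
  | body (p : FV) (j : ℕ) (q : FV) (E F : ExtProg Φ) (s : Multiset (Eqn Φ)) (e : Eqn Φ)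
      (G : Term Φ)
      (hbody : E.body = s + {e}) (hp : e.p = p) (happ : isApp e.rhs = true)
      (hG : (argsOf e.rhs)[j]? = some G) (himm : isImmediate G = false)
      (hq : FreshIn q E) (har : q.2.1 = e.xs.length)
      (hF : F = ⟨E.fvars, E.head,
        s + {⟨p, e.xs, withArgs e.rhs ((argsOf e.rhs).set j (.fapp q (e.xs.map Term.ivar)))⟩,
             ⟨q, e.xs, G⟩}⟩) :
      Step (p, j, q) E F
  | head (p : FV) (j : ℕ) (q : FV) (E F : ExtProg Φ) (G : Term Φ)
      (hp : FreshIn p E) (hq : FreshIn q E) (hpq : p ≠ q) (happ : isApp E.head = true)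
      (hG : (argsOf E.head)[j]? = some G) (himm : isImmediate G = false)
      (har : q.2.1 = E.fvars.length)
      (hF : F = ⟨E.fvars,
        withArgs E.head ((argsOf E.head).set j (.fapp q (E.fvars.map Term.ivar))),
        E.body + {⟨q, E.fvars, G⟩}⟩) :
      Step (p, j, q) E F

/-- One-step reduction: arrow reduction for some label. -/
def Step1 (E F : ExtProg Φ) : Prop := ∃ l : Lbl, Step l E F

/-- The `~_E` relation on function variables used in the Amalgamation Lemma:
`p ~_E p'` iff both are the same recursion variable of `E` (body case) or
neither is a recursion variable of `E` (head case). -/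
def SameCase (E : ExtProg Φ) (p p' : FV) : Prop :=
  (p = p' ∧ p ∈ bodyPvars E) ∨ (p ∉ bodyPvars E ∧ p' ∉ bodyPvars E)

/-- Size of an extended program: total number of occurrences of non-immediate
proper subterms of its parts. -/
def sizeP (E : ExtProg Φ) : ℕ := sizeT E.head + (E.body.map (fun e => sizeT e.rhs)).sum

/-- An extended program is irreducible if all its parts are irreducible terms. -/
def IrrProg (E : ExtProg Φ) : Prop :=
  isIrreducible E.head = true ∧ ∀ e ∈ E.body, isIrreducible e.rhs = true

/-! ## Congruence -/

/-- `ρ` preserves sorts and arities of function variables. -/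
def SortArityPres (ρ : FV → FV) : Prop := ∀ v : FV, (ρ v).1 = v.1 ∧ (ρ v).2.1 = v.2.1

/-- One equation is obtained from another by renaming the (bound) individual
variables and applying a renaming `ρ` of the function variables. -/
def EqnCong (ρ : FV → FV) (e f : Eqn Φ) : Prop :=
  f.p = ρ e.p ∧ ∃ σ : ℕ → ℕ,
    (∀ a ∈ e.xs, ∀ b ∈ e.xs, σ a = σ b → a = b) ∧
    f.xs = e.xs.map σ ∧ f.rhs = renameV σ (renameF ρ e.rhs)

/-- Congruence of extended programs: an alphabetic change of the bound individual
and function variables together with a permutation of the body equations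
(the latter being automatic in the multiset representation). -/
def Congruent (E F : ExtProg Φ) : Prop :=
  ∃ ρ : FV → FV, Function.Bijective ρ ∧ SortArityPres ρ ∧
    (∀ p : FV, p ∉ bodyPvars E → ρ p = p) ∧
    F.fvars = E.fvars ∧ F.head = renameF ρ E.head ∧
    Multiset.Rel (EqnCong ρ) E.body F.body

/-- Full reduction: a (possibly empty) chain of one-step reductions followed by a
congruence, i.e. `E ≡_c F` or `E →₁ ⋯ →₁ F' ≡_c F`. -/
def Reduces (E F : ExtProg Φ) : Prop :=
  ∃ G : ExtProg Φ, Relation.ReflTransGen Step1 E G ∧ Congruent G F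


/-! ## Semantics -/

section Semantics

variable {A : Type}

/-- An environment for the function variables: a partial function
`Aⁿ ⇀ A ⊕ Bool` for each function variable (`none` = divergence). -/
abbrev Env (A : Type) : Type := FV → List A → Option (A ⊕ Bool)

/-- A `Φ`-structure on the universe `A`: a partial interpretation of each
primitive (`Sum.inl` for sort `ind`, `Sum.inr` for sort `bool`). -/
abbrev Struc (Φ A : Type) : Type := Φ → List A → Option (A ⊕ Bool)

/-- An environment is sort- and arity-respecting. -/
def GoodEnv (env : Env A) : Prop :=
  ∀ p : FV, ∀ as v, env p as = some v →
    as.length = p.2.1 ∧ (p.1 = Srt.ind → ∃ a, v = Sum.inl a) ∧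
    (p.1 = Srt.bool → ∃ b, v = Sum.inr b)

/-- A structure is sort- and arity-respecting. -/
def GoodStruc (St : Struc Φ A) (arΦ : Φ → ℕ) (sΦ : Φ → Srt) : Prop :=
  ∀ φ as v, St φ as = some v →
    as.length = arΦ φ ∧ (sΦ φ = Srt.ind → ∃ a, v = Sum.inl a) ∧
    (sΦ φ = Srt.bool → ∃ b, v = Sum.inr b)

/-- A structure is total (on arguments of the right arity). -/
def TotalStruc (St : Struc Φ A) (arΦ : Φ → ℕ) : Prop :=
  ∀ φ as, as.length = arΦ φ → (St φ as).isSome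

mutual
/-- Kleene evaluation of terms: `none` means divergence; arguments of
applications are evaluated strictly and must be of sort `ind`; the conditional
evaluates its test first and then the selected branch. -/
def eval (St : Struc Φ A) (iv : ℕ → A) (env : Env A) : Term Φ → Option (A ⊕ Bool)
  | .tt => some (Sum.inr true)
  | .ff => some (Sum.inr false)
  | .ivar i => some (Sum.inl (iv i))
  | .fapp p args =>
      match evalArgs St iv env args with
      | none => none
      | some as => env p as
  | .prim f args =>
      match evalArgs St iv env args with
      | none => none
      | some as => St f as
  | .cond _ a b c =>
      match eval St iv env a with
      | some (Sum.inr true) => eval St iv env b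
      | some (Sum.inr false) => eval St iv env c
      | _ => none

def evalArgs (St : Struc Φ A) (iv : ℕ → A) (env : Env A) :
    List (Term Φ) → Option (List A)
  | [] => some []
  | t :: ts =>
      match eval St iv env t with
      | some (Sum.inl a) =>
          match evalArgs St iv env ts with
          | some as => some (a :: as)
          | none => none
      | _ => none
end

/-- Validity of the identity `E = F` in the structure: Kleene strong equality
under every assignment of individuals to the individual variables and of
sort-respecting partial functions to the function variables. -/
def Valid (St : Struc Φ A) (E F : Term Φ) : Prop :=
  ∀ (iv : ℕ → A) (env : Env A), GoodEnv env → eval St iv env E = eval St iv env F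

/-- An individual variable is *placed* in the identity
`φ(zs₁) = ψ(zs₂)` if it is one of the listed immediate arguments. -/
def Placed (zs₁ zs₂ : List (Term Φ)) (s : ℕ) : Prop := Term.ivar s ∈ zs₁ ++ zs₂

/-- Injective validity `A ⊨_inj φ(zs₁) = ψ(zs₂)`: validity under all
assignments which are injective on the placed individual variables. -/
def ValidInjId (St : Struc Φ A) (φ ψ : Φ) (zs₁ zs₂ : List (Term Φ)) : Prop :=
  ∀ (iv : ℕ → A) (env : Env A), GoodEnv env →
    (∀ s t, Placed zs₁ zs₂ s → Placed zs₁ zs₂ t → iv s = iv t → s = t) →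
    eval St iv env (.prim φ zs₁) = eval St iv env (.prim ψ zs₂)

/-- Bind the variables `xs` to the values `as` on top of the assignment `iv`. -/
def bindList (xs : List ℕ) (as : List A) (iv : ℕ → A) (i : ℕ) : A :=
  match xs.findIdx? (· = i) with
  | some k => as.getD k (iv i)
  | none => iv i

/-- `env` solves the system of recursive equations in the body of `E`. -/
def Solves (St : Struc Φ A) (iv : ℕ → A) (E : ExtProg Φ) (env : Env A) : Prop :=
  ∀ e ∈ E.body, ∀ as : List A, as.length = e.xs.length →
    env e.p as = eval St (bindList e.xs as iv) env e.rhs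

/-- The pointwise partial-function (information) ordering on environments. -/
def envLE (env env' : Env A) : Prop :=
  ∀ p as, env p as = none ∨ env p as = env' p as

/-- `Den St iv E w` : the denotation of the extended program `E` at the
assignment `iv` is `w`, computed by evaluating the head at the least solution
of the body. -/
def Den (St : Struc Φ A) (iv : ℕ → A) (E : ExtProg Φ) (w : Option (A ⊕ Bool)) : Prop :=
  ∃ env : Env A, Solves St iv E env ∧ (∀ env', Solves St iv E env' → envLE env env') ∧
    eval St iv env E.head = w

/-! ## Recursors and intensions -/

/-- The renaming of individual variables matching the list `xs` with the list `ys`. -/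
def bindRen (xs ys : List ℕ) (i : ℕ) : ℕ :=
  match xs.findIdx? (· = i) with
  | some k => ys.getD k i
  | none => i

/-- The parts of two irreducible programs define the same functional, modulo the
renaming `ρ` of the recursion variables and the matching of the bound individual
variables. -/
def EqnSemEq (St : Struc Φ A) (ρ : FV → FV) (e f : Eqn Φ) : Prop :=
  e.p = ρ f.p ∧ e.xs.length = f.xs.length ∧
  ∀ (iv : ℕ → A) (env : Env A), GoodEnv env →
    eval St iv env e.rhs = eval St iv env (renameV (bindRen f.xs e.xs) (renameF ρ f.rhs))

/-- The recursors of `E` and `F` on the structure are equal (strongly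
isomorphic): the bodies match up to a sort- and arity-preserving bijection of the
recursion variables, with the corresponding parts denoting the same functionals. -/
def RecEq (St : Struc Φ A) (E F : ExtProg Φ) : Prop :=
  ∃ ρ : FV → FV, Function.Bijective ρ ∧ SortArityPres ρ ∧
    (∀ (iv : ℕ → A) (env : Env A), GoodEnv env →
      eval St iv env E.head = eval St iv env (renameF ρ F.head)) ∧
    Multiset.Rel (EqnSemEq St ρ) E.body F.body

/-- Intensional equivalence on a structure: the referential intensions (the
recursors of the canonical forms) of the two programs are equal. -/
def IntEqOn (St : Struc Φ A) (E F : ExtProg Φ) : Prop :=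
  ∃ E' F' : ExtProg Φ, Reduces E E' ∧ IrrProg E' ∧ Reduces F F' ∧ IrrProg F' ∧
    RecEq St E' F'

end Semantics

/-- Global intensional equivalence: equal referential intensions in every
infinite `Φ`-structure. -/
def GlobalIntEq (E F : ExtProg Φ) : Prop :=
  ∀ (A : Type) (St : Struc Φ A), Infinite A → IntEqOn St E F

/-- A program is proper if none of its parts is an immediate term of Boolean sort. -/
def ProperProg (E : ExtProg Φ) : Prop :=
  ¬(isImmediate E.head = true ∧ immSort E.head = Srt.bool) ∧
  ∀ e ∈ E.body, ¬(isImmediate e.rhs = true ∧ immSort e.rhs = Srt.bool)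


/-! ## Pure algebraic terms (Statement 0) -/

/-- Pure algebraic terms: built only from individual variables and function
variables of sort `ind` (of the correct arities) by application. -/
inductive PureAlg : Term Φ → Prop where
  | ivar (i : ℕ) : PureAlg (.ivar i)
  | fapp (n i : ℕ) (args : List (Term Φ)) (hargs : ∀ t ∈ args, PureAlg t)
      (hlen : args.length = n) : PureAlg (.fapp (Srt.ind, n, i) args)

/-! ## Bare identities (Statements 14, 16) -/

/-- A term is an individual variable or a nullary function variable of sort `ind`. -/
def BareVarT (t : Term Φ) : Prop :=
  (∃ i, t = Term.ivar i) ∨ (∃ i, t = Term.fapp (Srt.ind, 0, i) [])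

/-- A bare variable: `(false, i)` codes the individual variable `v_i`,
`(true, i)` codes the nullary function variable `p^{ind,0}_i`. -/
abbrev BareVar : Type := Bool × ℕ

/-- Canonical choice of bare variables: each variable occurring for the first
time is the first unused variable of its kind in the fixed alternating list
`v₀, p₀, v₁, p₁, …`. -/
def CanonicalBare (xs : List BareVar) : Prop :=
  ∀ i x, xs[i]? = some x → (∀ j < i, xs[j]? ≠ some x) →
    x.2 = (((xs.take i).filter (fun y => y.1 == x.1)).dedup).length

/-- The representative function of an equivalence relation `r` on the placed
variables: a placed variable is sent to the least element of its class. -/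
noncomputable def repFun (placed : ℕ → Prop) (r : ℕ → ℕ → Prop) (s : ℕ) : ℕ :=
  open Classical in
  if placed s then sInf {j | r s j} else s

/-! ## Propositional programs coding graphs (Statement 19) -/

/-- The propositional variable `r`. -/
def rVar : FV := (Srt.bool, 0, 0)

/-- The propositional variable `p_i`. -/
def pVar (n : ℕ) (i : Fin n) : FV := (Srt.bool, 0, 1 + (i : ℕ))

/-- The propositional variable `p_{ij}`. -/
def pijVar (n : ℕ) (i j : Fin n) : FV := (Srt.bool, 0, 1 + n + ((i : ℕ) * n + (j : ℕ)))

/-- The part `E_{ij}` of the program coding the graph `E`. -/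
def edgeTerm (n : ℕ) (E : Fin n → Fin n → Bool) (i j : Fin n) : Term Empty :=
  if E i j then
    .cond Srt.bool (.fapp (pVar n i) []) (.fapp (pVar n j) []) (.fapp rVar [])
  else
    .cond Srt.bool (.fapp (pVar n i) []) (.fapp rVar []) (.fapp (pVar n j) [])

/-- The irreducible propositional program `prog(E)` coding the graph `E`:
`true where { p_i = p_i : i < n } ∪ { p_{ij} = E_{ij} : i,j < n } ∪ { r = false }`. -/
def graphProg (n : ℕ) (E : Fin n → Fin n → Bool) : ExtProg Empty where
  fvars := []
  head := .tt
  body :=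
    (Finset.univ.val.map (fun i : Fin n => (⟨pVar n i, [], .fapp (pVar n i) []⟩ : Eqn Empty)))
    + ((Finset.univ.val (α := Fin n × Fin n)).map
        (fun ij => (⟨pijVar n ij.1 ij.2, [], edgeTerm n E ij.1 ij.2⟩ : Eqn Empty)))
    + {⟨rVar, [], .ff⟩}


/-! ## Auxiliary lemmas for Statement 6 -/

section Aux
variable {A : Type}

theorem occursFL_mem {q : FV} : ∀ {ts : List (Term Φ)}, occursFL q ts = false →
    ∀ t ∈ ts, occursF q t = false := by
  intro ts
  induction ts with
  | nil => intro _ t ht; simp at ht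
  | cons a l ih =>
    intro h t ht
    rw [occursFL, Bool.or_eq_false_iff] at h
    rcases List.mem_cons.mp ht with rfl | ht
    · exact h.1
    · exact ih h.2 t ht

theorem occursF_args {q : FV} {t : Term Φ} (happ : isApp t = true)
    (h : occursF q t = false) : ∀ s ∈ argsOf t, occursF q s = false := by
  cases t with
  | fapp p args =>
      rw [occursF, Bool.or_eq_false_iff] at h
      exact occursFL_mem h.2
  | prim f args =>
      rw [occursF] at h
      exact occursFL_mem h
  | cond s a b c =>
      rw [occursF, Bool.or_eq_false_iff, Bool.or_eq_false_iff] at h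
      intro u hu
      simp only [argsOf, List.mem_cons, List.not_mem_nil, or_false] at hu
      rcases hu with rfl | rfl | rfl
      · exact h.1.1
      · exact h.1.2
      · exact h.2
  | tt => simp [isApp] at happ
  | ff => simp [isApp] at happ
  | ivar i => simp [isApp] at happ

theorem occursF_fapp_ne {q r : FV} {args : List (Term Φ)}
    (h : occursF q (.fapp r args) = false) : r ≠ q := by
  rw [occursF, Bool.or_eq_false_iff] at h
  simpa using h.1

mutual
theorem eval_congr (St : Struc Φ A) (iv : ℕ → A) (env env' : Env A) (t : Term Φ)
    (h : ∀ p, occursF p t = true → env p = env' p) :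
    eval St iv env t = eval St iv env' t :=
  match t with
  | .tt => rfl
  | .ff => rfl
  | .ivar _ => rfl
  | .fapp p args => by
      have h1 : evalArgs St iv env args = evalArgs St iv env' args :=
        evalArgs_congr St iv env env' args
          (fun r hr => h r (by rw [occursF, hr, Bool.or_true]))
      have h2 : env p = env' p := h p (by simp [occursF])
      rw [eval, eval, h1, h2]
  | .prim f args => by
      have h1 : evalArgs St iv env args = evalArgs St iv env' args :=
        evalArgs_congr St iv env env' args (fun r hr => h r (by rw [occursF, hr]))
      rw [eval, eval, h1]
  | .cond s a b c => by
      have ha := eval_congr St iv env env' a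
        (fun r hr => h r (by rw [occursF, hr]; simp))
      have hb := eval_congr St iv env env' b
        (fun r hr => h r (by rw [occursF, hr]; simp))
      have hc := eval_congr St iv env env' c
        (fun r hr => h r (by rw [occursF, hr]; simp))
      rw [eval, eval, ha, hb, hc]

theorem evalArgs_congr (St : Struc Φ A) (iv : ℕ → A) (env env' : Env A)
    (ts : List (Term Φ)) (h : ∀ p, occursFL p ts = true → env p = env' p) :
    evalArgs St iv env ts = evalArgs St iv env' ts :=
  match ts with
  | [] => rfl
  | t :: l => by
      have h1 := eval_congr St iv env env' t (fun r hr => h r (by rw [occursFL, hr]; simp))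
      have h2 := evalArgs_congr St iv env env' l
        (fun r hr => h r (by rw [occursFL, hr, Bool.or_true]))
      rw [evalArgs, evalArgs, h1, h2]
end

mutual
theorem eval_mono (St : Struc Φ A) (iv : ℕ → A) {env env' : Env A}
    (h : envLE env env') (t : Term Φ) :
    eval St iv env t = none ∨ eval St iv env t = eval St iv env' t :=
  match t with
  | .tt => Or.inr rfl
  | .ff => Or.inr rfl
  | .ivar _ => Or.inr rfl
  | .fapp p args => by
      rcases evalArgs_mono St iv h args with h1 | h1
      · left; rw [eval, h1]
      · rw [eval, eval, h1]
        cases hv : evalArgs St iv env' args with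
        | none => left; rfl
        | some as => exact h p as
  | .prim f args => by
      rcases evalArgs_mono St iv h args with h1 | h1
      · left; rw [eval, h1]
      · rw [eval, eval, h1]; exact Or.inr rfl
  | .cond s a b c => by
      rcases eval_mono St iv h a with h1 | h1
      · left; rw [eval, h1]
      · rw [eval, eval, h1]
        cases hv : eval St iv env' a with
        | none => left; rfl
        | some v =>
          cases v with
          | inl x => left; rfl
          | inr b' =>
            cases b' with
            | true => exact eval_mono St iv h b
            | false => exact eval_mono St iv h c

theorem evalArgs_mono (St : Struc Φ A) (iv : ℕ → A) {env env' : Env A}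
    (h : envLE env env') (ts : List (Term Φ)) :
    evalArgs St iv env ts = none ∨ evalArgs St iv env ts = evalArgs St iv env' ts :=
  match ts with
  | [] => Or.inr rfl
  | t :: l => by
      rcases eval_mono St iv h t with h1 | h1
      · left; rw [evalArgs, h1]
      · rw [evalArgs, evalArgs, h1]
        cases hv : eval St iv env' t with
        | none => left; rfl
        | some v =>
          cases v with
          | inr b => left; rfl
          | inl a =>
            rcases evalArgs_mono St iv h l with h2 | h2
            · left; rw [h2]
            · rw [h2]; exact Or.inr rfl
end

end Aux


section Aux2
variable {A : Type}

theorem bindList_not_mem {xs : List ℕ} {as : List A} {iv : ℕ → A} {i : ℕ}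
    (h : i ∉ xs) : bindList xs as iv i = iv i := by
  have hn : xs.findIdx? (· = i) = none := by
    rw [List.findIdx?_eq_none_iff]
    intro x hx
    simp only [decide_eq_false_iff_not]
    rintro rfl; exact h hx
  simp only [bindList, hn]

theorem bindList_map_eq {xs : List ℕ} {g iv : ℕ → A}
    (hg : ∀ i, i ∉ xs → g i = iv i) : bindList xs (xs.map g) iv = g := by
  funext i
  by_cases hi : i ∈ xs
  · have hsome : (xs.findIdx? (· = i)).isSome := by
      rw [List.findIdx?_isSome, List.any_eq_true]
      exact ⟨i, hi, by simp⟩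
    obtain ⟨k, hk⟩ := Option.isSome_iff_exists.mp hsome
    obtain ⟨hlt, hpk, -⟩ := List.findIdx?_eq_some_iff_getElem.mp hk
    have hxk : xs[k] = i := by simpa using hpk
    simp only [bindList, hk]
    rw [List.getD_eq_getElem?_getD, List.getElem?_map,
      List.getElem?_eq_getElem hlt]
    simp [hxk]
  · rw [bindList_not_mem hi]
    exact (hg i hi).symm

theorem forall2_refl' {α : Type*} {R : α → α → Prop} :
    ∀ (l : List α), (∀ t ∈ l, R t t) → List.Forall₂ R l l
  | [], _ => List.Forall₂.nil
  | a :: l, h => List.Forall₂.cons (h a (by simp))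
      (forall2_refl' l (fun t ht => h t (List.mem_cons_of_mem a ht)))

theorem forall2_set {α : Type*} {R : α → α → Prop} :
    ∀ (l : List α) (j : ℕ) {G : α} (H : α), l[j]? = some G →
      (∀ t ∈ l, R t t) → R G H → List.Forall₂ R l (l.set j H)
  | [], j, _, H, hG, _, _ => by simp at hG
  | a :: l, 0, G, H, hG, hr, hGH => by
      simp only [List.getElem?_cons_zero] at hG
      cases hG
      exact List.Forall₂.cons hGH
        (forall2_refl' l (fun t ht => hr t (List.mem_cons_of_mem a ht)))
  | a :: l, j + 1, G, H, hG, hr, hGH => by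
      simp only [List.getElem?_cons_succ] at hG
      exact List.Forall₂.cons (hr a (by simp))
        (forall2_set l j H hG (fun t ht => hr t (List.mem_cons_of_mem a ht)) hGH)

theorem evalArgs_forall2 {St : Struc Φ A} {iv : ℕ → A} {env env' : Env A}
    {ts ts' : List (Term Φ)}
    (h : List.Forall₂ (fun a b => eval St iv env a = eval St iv env' b) ts ts') :
    evalArgs St iv env ts = evalArgs St iv env' ts' := by
  induction h with
  | nil => rfl
  | @cons a b l l' hab _ ih => rw [evalArgs, evalArgs, hab, ih]

theorem evalArgs_map_ivar (St : Struc Φ A) (iv : ℕ → A) (env : Env A) :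
    ∀ xs : List ℕ, evalArgs St iv env (xs.map Term.ivar) = some (xs.map iv)
  | [] => rfl
  | x :: xs => by
      rw [List.map_cons, evalArgs, eval, evalArgs_map_ivar St iv env xs, List.map_cons]

/-- The key replacement lemma: replacing the `j`-th argument of an application by a
call to a fresh function variable `q` whose value is the value of that argument. -/
theorem key_lemma (St : Struc Φ A) (ivv : ℕ → A) (env env' : Env A)
    (rhs : Term Φ) {G : Term Φ} (j : ℕ) (q : FV) (xs : List ℕ)
    (happ : isApp rhs = true) (hG : (argsOf rhs)[j]? = some G)
    (hocc : occursF q rhs = false)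
    (hagree : ∀ r, r ≠ q → env r = env' r)
    (hqval : env' q (xs.map ivv) = eval St ivv env' G) :
    eval St ivv env rhs =
      eval St ivv env' (withArgs rhs ((argsOf rhs).set j (.fapp q (xs.map Term.ivar)))) := by
  have hargsocc : ∀ s ∈ argsOf rhs, occursF q s = false := occursF_args happ hocc
  have hGmem : G ∈ argsOf rhs := List.mem_of_getElem? hG
  have hcongrG : ∀ s ∈ argsOf rhs, eval St ivv env s = eval St ivv env' s := by
    intro s hs
    refine eval_congr St ivv env env' s (fun r hr => hagree r ?_)
    rintro rfl
    rw [hargsocc s hs] at hr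
    exact Bool.false_ne_true hr
  have hGeval : eval St ivv env G = eval St ivv env' (.fapp q (xs.map Term.ivar)) := by
    have h1 : eval St ivv env' (.fapp q (xs.map Term.ivar)) = env' q (xs.map ivv) := by
      rw [eval, evalArgs_map_ivar]
    rw [h1, hqval]
    exact hcongrG G hGmem
  have hfa : List.Forall₂ (fun a b => eval St ivv env a = eval St ivv env' b)
      (argsOf rhs) ((argsOf rhs).set j (.fapp q (xs.map Term.ivar))) :=
    forall2_set _ j _ hG hcongrG hGeval
  cases rhs with
  | tt => simp [isApp] at happ
  | ff => simp [isApp] at happ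
  | ivar i => simp [isApp] at happ
  | fapp p args =>
      have hp : env p = env' p := hagree p (occursF_fapp_ne hocc)
      have e1 : argsOf (Term.fapp p args) = args := rfl
      rw [e1] at hfa
      have e2 : withArgs (Term.fapp p args) (args.set j (.fapp q (xs.map Term.ivar)))
          = Term.fapp p (args.set j (.fapp q (xs.map Term.ivar))) := rfl
      rw [eval, e1, e2, eval, evalArgs_forall2 hfa, hp]
  | prim f args =>
      have e1 : argsOf (Term.prim f args) = args := rfl
      rw [e1] at hfa
      have e2 : withArgs (Term.prim f args) (args.set j (.fapp q (xs.map Term.ivar)))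
          = Term.prim f (args.set j (.fapp q (xs.map Term.ivar))) := rfl
      rw [eval, e1, e2, eval, evalArgs_forall2 hfa]
  | cond s a b c =>
      have e1 : argsOf (Term.cond s a b c) = [a, b, c] := rfl
      rw [e1] at hG
      have ha := hcongrG a (by rw [e1]; simp)
      have hb := hcongrG b (by rw [e1]; simp)
      have hc := hcongrG c (by rw [e1]; simp)
      set X : Term Φ := Term.fapp q (xs.map Term.ivar) with hX
      match j, hG with
      | 0, hG =>
          simp at hG
          subst a
          have e2 : withArgs (Term.cond s G b c) ((argsOf (Term.cond s G b c)).set 0 X)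
              = Term.cond s X b c := rfl
          rw [e2, eval, eval, hGeval, hb, hc]
      | 1, hG =>
          simp at hG
          subst b
          have e2 : withArgs (Term.cond s a G c) ((argsOf (Term.cond s a G c)).set 1 X)
              = Term.cond s a X c := rfl
          rw [e2, eval, eval, hGeval, ha, hc]
      | 2, hG =>
          simp at hG
          subst c
          have e2 : withArgs (Term.cond s a b G) ((argsOf (Term.cond s a b G)).set 2 X)
              = Term.cond s a b X := rfl
          rw [e2, eval, eval, hGeval, ha, hb]
      | (n+3), hG => simp at hG

end Aux2


section Aux3
variable {A : Type}

/-- Extend `env` at the fresh variable `q` by the functional determined by `G`. -/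
def extEnv (St : Struc Φ A) (iv : ℕ → A) (env : Env A) (q : FV) (xs : List ℕ)
    (G : Term Φ) : Env A :=
  fun r bs => if r = q then
    (if bs.length = xs.length then eval St (bindList xs bs iv) env G else none)
  else env r bs

/-- Delete the value of `env` at `q`. -/
def delEnv (env : Env A) (q : FV) : Env A :=
  fun r bs => if r = q then none else env r bs

theorem extEnv_ne {St : Struc Φ A} {iv : ℕ → A} {env : Env A} {q r : FV} {xs : List ℕ}
    {G : Term Φ} (h : r ≠ q) : extEnv St iv env q xs G r = env r := by
  funext bs; simp [extEnv, h]

theorem extEnv_q_len {St : Struc Φ A} {iv : ℕ → A} {env : Env A} {q : FV} {xs : List ℕ}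
    {G : Term Φ} {bs : List A} (h : bs.length = xs.length) :
    extEnv St iv env q xs G q bs = eval St (bindList xs bs iv) env G := by
  simp [extEnv, h]

theorem extEnv_q_nlen {St : Struc Φ A} {iv : ℕ → A} {env : Env A} {q : FV} {xs : List ℕ}
    {G : Term Φ} {bs : List A} (h : ¬ bs.length = xs.length) :
    extEnv St iv env q xs G q bs = none := by
  simp [extEnv, h]

theorem delEnv_ne {env : Env A} {q r : FV} (h : r ≠ q) : delEnv env q r = env r := by
  funext bs; simp [delEnv, h]

theorem ne_of_not_occurs {q r : FV} {t : Term Φ} (hocc : occursF q t = false)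
    (hr : occursF r t = true) : r ≠ q := by
  rintro rfl; rw [hocc] at hr; exact Bool.false_ne_true hr

theorem eval_extEnv {St : Struc Φ A} {iv iv' : ℕ → A} {env : Env A} {q : FV} {xs : List ℕ}
    {G t : Term Φ} (hocc : occursF q t = false) :
    eval St iv' (extEnv St iv env q xs G) t = eval St iv' env t :=
  eval_congr St iv' _ env t (fun r hr => extEnv_ne (ne_of_not_occurs hocc hr))

theorem eval_delEnv {St : Struc Φ A} {iv' : ℕ → A} {env : Env A} {q : FV}
    {t : Term Φ} (hocc : occursF q t = false) :
    eval St iv' (delEnv env q) t = eval St iv' env t :=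
  eval_congr St iv' _ env t (fun r hr => delEnv_ne (ne_of_not_occurs hocc hr))

theorem bindList_map_bind (xs : List ℕ) (as : List A) (iv : ℕ → A) :
    bindList xs (xs.map (bindList xs as iv)) iv = bindList xs as iv :=
  bindList_map_eq (fun _ hi => bindList_not_mem hi)

theorem bindList_map_self (xs : List ℕ) (iv : ℕ → A) :
    bindList xs (xs.map iv) iv = iv :=
  bindList_map_eq (fun _ _ => rfl)

end Aux3

/-- One-step (arrow) reduction preserves denotations: if
`E(x⃗) →^{(p,j,q)} F(x⃗)`, then in every `Φ`-structure and at every assignment the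
denotations of `E(x⃗)` and `F(x⃗)` (least-fixed-point semantics, Kleene strong
equality of partial values) coincide. -/
theorem statement6 {Φ : Type} (l : Lbl) (E F : ExtProg Φ) (h : Step l E F)
    (A : Type) (St : Struc Φ A) (iv : ℕ → A) (w : Option (A ⊕ Bool)) :
    Den St iv E w ↔ Den St iv F w := by
  cases h with
  | body p j q E F s e G hbody hp happ hG himm hq har hF =>
    clear himm har
    subst hF
    subst hp
    obtain ⟨hqhead, hqbody⟩ := hq
    have he_mem : e ∈ E.body := by
      rw [hbody]; exact Multiset.mem_add.mpr (Or.inr (Multiset.mem_singleton_self e))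
    have hqe := hqbody e he_mem
    have hqs : ∀ e' ∈ s, e'.p ≠ q ∧ occursF q e'.rhs = false := fun e' he' =>
      hqbody e' (by rw [hbody]; exact Multiset.mem_add.mpr (Or.inl he'))
    have hqG : occursF q G = false := occursF_args happ hqe.2 G (List.mem_of_getElem? hG)
    -- abbreviations
    set RHS : Term Φ :=
      withArgs e.rhs ((argsOf e.rhs).set j (.fapp q (e.xs.map Term.ivar))) with hRHS
    set newe : Eqn Φ := ⟨e.p, e.xs, RHS⟩ with hnewe
    set qeq : Eqn Φ := ⟨q, e.xs, G⟩ with hqeqd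
    have hmem_new : newe ∈ s + ({newe, qeq} : Multiset (Eqn Φ)) :=
      Multiset.mem_add.mpr (Or.inr (Multiset.mem_cons_self newe _))
    have hmem_q : qeq ∈ s + ({newe, qeq} : Multiset (Eqn Φ)) :=
      Multiset.mem_add.mpr (Or.inr (Multiset.mem_cons.mpr
        (Or.inr (Multiset.mem_singleton_self qeq))))
    -- the key equation, specialised
    have keyE : ∀ (env env' : Env A), (∀ r, r ≠ q → env r = env' r) →
        (∀ bs : List A, bs.length = e.xs.length →
          env' q bs = eval St (bindList e.xs bs iv) env' G) →
        ∀ as : List A,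
          eval St (bindList e.xs as iv) env e.rhs = eval St (bindList e.xs as iv) env' RHS := by
      intro env env' hagree hq' as
      refine key_lemma St _ env env' e.rhs j q e.xs happ hG hqe.2 hagree ?_
      have hlen : (e.xs.map (bindList e.xs as iv)).length = e.xs.length := by simp
      rw [hq' _ hlen, bindList_map_bind]
    -- every solution of F solves E
    have claimA : ∀ env' : Env A,
        Solves St iv ⟨E.fvars, E.head, s + {newe, qeq}⟩ env' → Solves St iv E env' := by
      intro env' hsol e' he' as hlen
      rw [hbody, Multiset.mem_add] at he'
      rcases he' with he' | he'
      · exact hsol e' (Multiset.mem_add.mpr (Or.inl he')) as hlen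
      · rw [Multiset.mem_singleton] at he'
        subst he'
        have h1 : env' e'.p as = eval St (bindList e'.xs as iv) env' RHS :=
          hsol newe hmem_new as hlen
        have h2 : ∀ bs : List A, bs.length = e'.xs.length →
            env' q bs = eval St (bindList e'.xs bs iv) env' G :=
          fun bs hbs => hsol qeq hmem_q bs hbs
        rw [h1]
        exact (keyE env' env' (fun _ _ => rfl) h2 as).symm
    -- extending a solution of E gives a solution of F
    have claimB : ∀ env : Env A, Solves St iv E env →
        Solves St iv ⟨E.fvars, E.head, s + {newe, qeq}⟩ (extEnv St iv env q e.xs G) := by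
      intro env hsol f hf as hlen
      have hagree : ∀ r, r ≠ q → extEnv St iv env q e.xs G r = env r :=
        fun r hr => extEnv_ne hr
      have hq' : ∀ bs : List A, bs.length = e.xs.length →
          extEnv St iv env q e.xs G q bs =
            eval St (bindList e.xs bs iv) (extEnv St iv env q e.xs G) G := by
        intro bs hbs
        rw [extEnv_q_len hbs, eval_extEnv hqG]
      rcases Multiset.mem_add.mp hf with hf | hf
      · have h1 : extEnv St iv env q e.xs G f.p as = env f.p as := by
          rw [hagree f.p (hqs f hf).1]
        rw [h1, hsol f (by rw [hbody]; exact Multiset.mem_add.mpr (Or.inl hf)) as hlen,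
          (eval_extEnv (hqs f hf).2).symm]
      · rcases Multiset.mem_cons.mp hf with hf | hf
        · subst hf
          have h1 : extEnv St iv env q e.xs G e.p as = env e.p as := by
            rw [hagree e.p hqe.1]
          have h2 : env e.p as = eval St (bindList e.xs as iv) env e.rhs :=
            hsol e he_mem as hlen
          show extEnv St iv env q e.xs G e.p as
            = eval St (bindList e.xs as iv) (extEnv St iv env q e.xs G) RHS
          rw [h1, h2]
          exact keyE env (extEnv St iv env q e.xs G) (fun r hr => (hagree r hr).symm) hq' as
        · rw [Multiset.mem_singleton] at hf
          subst hf
          show extEnv St iv env q e.xs G q as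
            = eval St (bindList e.xs as iv) (extEnv St iv env q e.xs G) G
          rw [extEnv_q_len hlen, eval_extEnv hqG]
    constructor
    · rintro ⟨envE, hsolE, hleastE, hevE⟩
      refine ⟨extEnv St iv envE q e.xs G, claimB envE hsolE, ?_, ?_⟩
      · intro env' hsol'
        have hle := hleastE env' (claimA env' hsol')
        intro r bs
        by_cases hr : r = q
        · subst r
          by_cases hbs : bs.length = e.xs.length
          · rw [extEnv_q_len hbs]
            have h2 : env' q bs = eval St (bindList e.xs bs iv) env' G :=
              hsol' qeq hmem_q bs hbs
            rcases eval_mono St (bindList e.xs bs iv) hle G with h | h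
            · exact Or.inl h
            · exact Or.inr (by rw [h, h2])
          · exact Or.inl (extEnv_q_nlen hbs)
        · have h1 : extEnv St iv envE q e.xs G r bs = envE r bs := by
            rw [extEnv_ne hr]
          rcases hle r bs with h | h
          · exact Or.inl (by rw [h1, h])
          · exact Or.inr (by rw [h1, h])
      · show eval St iv (extEnv St iv envE q e.xs G) E.head = w
        rw [eval_extEnv hqhead, hevE]
    · rintro ⟨envF, hsolF, hleastF, hevF⟩
      refine ⟨delEnv envF q, ?_, ?_, ?_⟩
      · intro f hf as hlen
        have hfq : f.p ≠ q ∧ occursF q f.rhs = false := hqbody f hf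
        have h1 : delEnv envF q f.p as = envF f.p as := by rw [delEnv_ne hfq.1]
        rw [h1, claimA envF hsolF f hf as hlen, (eval_delEnv hfq.2).symm]
      · intro env hsol'
        have hle := hleastF _ (claimB env hsol')
        intro r bs
        by_cases hr : r = q
        · subst r
          exact Or.inl (by simp [delEnv])
        · have h1 : delEnv envF q r bs = envF r bs := by rw [delEnv_ne hr]
          rcases hle r bs with h | h
          · exact Or.inl (by rw [h1, h])
          · refine Or.inr ?_
            rw [h1, h]
            show extEnv St iv env q e.xs G r bs = env r bs
            rw [extEnv_ne hr]
      · show eval St iv (delEnv envF q) E.head = w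
        rw [eval_delEnv hqhead]
        exact hevF
  | head p j q E F G hp hq hpq happ hG himm har hF =>
    clear himm har hp hpq
    subst hF
    obtain ⟨hqhead, hqbody⟩ := hq
    have hqG : occursF q G = false := occursF_args happ hqhead G (List.mem_of_getElem? hG)
    set RHS : Term Φ :=
      withArgs E.head ((argsOf E.head).set j (.fapp q (E.fvars.map Term.ivar))) with hRHS
    set qeq : Eqn Φ := ⟨q, E.fvars, G⟩ with hqeqd
    have hmem_q : qeq ∈ E.body + ({qeq} : Multiset (Eqn Φ)) :=
      Multiset.mem_add.mpr (Or.inr (Multiset.mem_singleton_self qeq))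
    have keyH : ∀ (env env' : Env A), (∀ r, r ≠ q → env r = env' r) →
        env' q (E.fvars.map iv) = eval St iv env' G →
        eval St iv env E.head = eval St iv env' RHS := by
      intro env env' hagree hq'
      exact key_lemma St iv env env' E.head j q E.fvars happ hG hqhead hagree hq'
    have claimA : ∀ env' : Env A,
        Solves St iv ⟨E.fvars, RHS, E.body + {qeq}⟩ env' → Solves St iv E env' := by
      intro env' hsol e' he' as hlen
      exact hsol e' (Multiset.mem_add.mpr (Or.inl he')) as hlen
    have claimB : ∀ env : Env A, Solves St iv E env →
        Solves St iv ⟨E.fvars, RHS, E.body + {qeq}⟩ (extEnv St iv env q E.fvars G) := by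
      intro env hsol f hf as hlen
      rcases Multiset.mem_add.mp hf with hf | hf
      · have hfq := hqbody f hf
        have h1 : extEnv St iv env q E.fvars G f.p as = env f.p as := by
          rw [extEnv_ne hfq.1]
        rw [h1, hsol f hf as hlen, (eval_extEnv hfq.2).symm]
      · rw [Multiset.mem_singleton] at hf
        subst hf
        show extEnv St iv env q E.fvars G q as
          = eval St (bindList E.fvars as iv) (extEnv St iv env q E.fvars G) G
        rw [extEnv_q_len hlen, eval_extEnv hqG]
    constructor
    · rintro ⟨envE, hsolE, hleastE, hevE⟩
      refine ⟨extEnv St iv envE q E.fvars G, claimB envE hsolE, ?_, ?_⟩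
      · intro env' hsol'
        have hle := hleastE env' (claimA env' hsol')
        intro r bs
        by_cases hr : r = q
        · subst r
          by_cases hbs : bs.length = E.fvars.length
          · rw [extEnv_q_len hbs]
            have h2 : env' q bs = eval St (bindList E.fvars bs iv) env' G :=
              hsol' qeq hmem_q bs hbs
            rcases eval_mono St (bindList E.fvars bs iv) hle G with h | h
            · exact Or.inl h
            · exact Or.inr (by rw [h, h2])
          · exact Or.inl (extEnv_q_nlen hbs)
        · have h1 : extEnv St iv envE q E.fvars G r bs = envE r bs := by
            rw [extEnv_ne hr]
          rcases hle r bs with h | h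
          · exact Or.inl (by rw [h1, h])
          · exact Or.inr (by rw [h1, h])
      · show eval St iv (extEnv St iv envE q E.fvars G) RHS = w
        have hq' : extEnv St iv envE q E.fvars G q (E.fvars.map iv)
            = eval St iv (extEnv St iv envE q E.fvars G) G := by
          have hlen : (E.fvars.map iv).length = E.fvars.length := by simp
          rw [extEnv_q_len hlen, bindList_map_self, eval_extEnv hqG]
        rw [← keyH envE _ (fun r hr => (extEnv_ne hr).symm) hq']
        exact hevE
    · rintro ⟨envF, hsolF, hleastF, hevF⟩
      refine ⟨delEnv envF q, ?_, ?_, ?_⟩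
      · intro f hf as hlen
        have hfq := hqbody f hf
        have h1 : delEnv envF q f.p as = envF f.p as := by rw [delEnv_ne hfq.1]
        rw [h1, hsolF f (Multiset.mem_add.mpr (Or.inl hf)) as hlen,
          (eval_delEnv hfq.2).symm]
      · intro env hsol'
        have hle := hleastF _ (claimB env hsol')
        intro r bs
        by_cases hr : r = q
        · subst r
          exact Or.inl (by simp [delEnv])
        · have h1 : delEnv envF q r bs = envF r bs := by rw [delEnv_ne hr]
          rcases hle r bs with h | h
          · exact Or.inl (by rw [h1, h])
          · refine Or.inr ?_
            rw [h1, h]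
            show extEnv St iv env q E.fvars G r bs = env r bs
            rw [extEnv_ne hr]
      · show eval St iv (delEnv envF q) E.head = w
        have hq' : envF q (E.fvars.map iv) = eval St iv envF G := by
          have hlen : (E.fvars.map iv).length = E.fvars.length := by simp
          rw [hsolF qeq hmem_q (E.fvars.map iv) hlen, bindList_map_self]
        rw [eval_delEnv hqhead, keyH envF envF (fun _ _ => rfl) hq']
        exact hevF

end McCarthy
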